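/- Let P be a nonempty finite set, let δ : P → ℕ, σ : P → ℕ, let M > 0 be real, let d : P → ℝ satisfy 0 < d(p) ≤ M for all p ∈ P, let T be a real number with T ≥ δ(p) + d(p)/M for all p ∈ P, and define the cost c(p) = δ(p) + d(p)/M + T·σ(p). Suppose there exists p ∈ P with σ(p) = 0. Then: (a) every p₀ minimizing c over P satisfies σ(p₀) = 0; (b) moreover, every such minimizer p₀ satisfies δ(p₀) = min { δ(p) : σ(p) = 0 }, and d(p₀) = min { d(p) : σ(p) = 0 and δ(p) = min_{q: σ(q)=0} δ(q) }. -/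
import Mathlib


/-- Correctness of the greedy cost function
`c p = δ p + d p / M + T · σ p`, where `0 < d p ≤ M`, `T ≥ δ p + d p / M` for every `p`,
and some `p` has `σ p = 0`.  Every minimizer `p₀` of `c` satisfies `σ p₀ = 0`,
has `δ p₀` minimal among `{δ p : σ p = 0}`, and `d p₀` minimal among
`{d p : σ p = 0 and δ p minimal among σ = 0}`. -/
theorem stmt5 {P : Type*} [Fintype P] [Nonempty P]
    (δ σ : P → ℕ) (M : ℝ) (hM : 0 < M)
    (d : P → ℝ) (hd : ∀ p, 0 < d p ∧ d p ≤ M)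
    (T : ℝ) (hT : ∀ p, (δ p : ℝ) + d p / M ≤ T)
    (c : P → ℝ) (hc : ∀ p, c p = (δ p : ℝ) + d p / M + T * (σ p : ℝ))
    (hex : ∃ p, σ p = 0)
    (p₀ : P) (hp₀ : ∀ p, c p₀ ≤ c p) :
    σ p₀ = 0 ∧
    IsLeast {n : ℕ | ∃ p, σ p = 0 ∧ δ p = n} (δ p₀) ∧
    IsLeast {v : ℝ | ∃ p, σ p = 0 ∧ (∀ q, σ q = 0 → δ p ≤ δ q) ∧ d p = v} (d p₀) := by
  obtain ⟨q0, hq0⟩ := hex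
  have hdM : ∀ p, 0 < d p / M := fun p => div_pos (hd p).1 hM
  have hdM1 : ∀ p, d p / M ≤ 1 := fun p => (div_le_one hM).2 (hd p).2
  have hσ0 : σ p₀ = 0 := by
    by_contra h
    have h1 : (1:ℝ) ≤ (σ p₀ : ℝ) := by exact_mod_cast Nat.one_le_iff_ne_zero.2 h
    have hcq : c q0 = (δ q0 : ℝ) + d q0 / M := by rw [hc, hq0]; simp
    have hT0 : 0 < T := lt_of_lt_of_le (by have h2 : (0:ℝ) ≤ (δ q0:ℝ) := Nat.cast_nonneg _; linarith [hdM q0]) (hT q0)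
    have hlt : T < c p₀ := by
      rw [hc]
      have h3 : (0:ℝ) ≤ (δ p₀:ℝ) := Nat.cast_nonneg _; nlinarith [hdM p₀]
    have h2 := hp₀ q0
    rw [hcq] at h2
    linarith [hT q0]
  have hδmin : ∀ q, σ q = 0 → δ p₀ ≤ δ q := by
    intro q hq
    have h1 := hp₀ q
    rw [hc, hc, hσ0, hq] at h1
    simp only [Nat.cast_zero, mul_zero, add_zero] at h1
    have h2 : (δ p₀ : ℝ) < (δ q : ℝ) + 1 := by
      nlinarith [hdM p₀, hdM1 q]
    exact_mod_cast Nat.lt_succ_iff.1 (by exact_mod_cast h2)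
  refine ⟨hσ0, ⟨⟨p₀, hσ0, rfl⟩, ?_⟩, ⟨⟨p₀, hσ0, hδmin, rfl⟩, ?_⟩⟩
  · rintro n ⟨p, hp, rfl⟩; exact hδmin p hp
  · rintro v ⟨q, hq, hqmin, rfl⟩
    have hδeq : δ q = δ p₀ := le_antisymm (hqmin p₀ hσ0) (hδmin q hq)
    have h1 := hp₀ q
    rw [hc, hc, hσ0, hq, hδeq] at h1
    simp only [Nat.cast_zero, mul_zero, add_zero] at h1
    have h2 : d p₀ / M ≤ d q / M := by linarith
    exact (div_le_div_iff_of_pos_right hM).1 h2
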